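/- Let P_X be a probability distribution on a finite set 𝒳, let V_{Z|X} be a channel to a finite set 𝒵, and let Q_Z be the uniform distribution on 𝒵. Define I(α) = I(P_X × [ᾱ·Q_Z + α·V_{Z|X}]) (the mutual information of the joint distribution P_X(x)·[(1−α)Q_Z(z)+α·V_{Z|X}(z|x)]). If I(P_X × V_{Z|X}) > 0, then for every α ∈ (0,1), I(α) < α·I(P_X × V_{Z|X}). -/

import Mathlib

open Finset

/-- Mutual information of a joint distribution `j` on `𝒳 × 𝒵`,
`I(j) = Σ_{x,z} j(x,z)·log( j(x,z) / (j_X(x)·j_Z(z)) )`. -/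
noncomputable def mutualInfo {X Z : Type*} [Fintype X] [Fintype Z]
    (j : X → Z → ℝ) : ℝ :=
  ∑ x, ∑ z, j x z * Real.log (j x z / ((∑ z', j x z') * (∑ x', j x' z)))

private lemma key_le (c a b : ℝ) (hc : 0 < c) (ha : 0 ≤ a) (hb : 0 < b) :
    (c + a) * Real.log ((c + a) / (c + b)) ≤ a * Real.log (a / b) := by
  have hcb : 0 < c + b := by linarith
  have h1 : (0:ℝ) ≤ c / (c + b) := by positivity
  have h2 : (0:ℝ) ≤ b / (c + b) := by positivity
  have h3 : c / (c + b) + b / (c + b) = 1 := by field_simp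
  have hmem1 : (1:ℝ) ∈ Set.Ici (0:ℝ) := by norm_num
  have hmem2 : a / b ∈ Set.Ici (0:ℝ) := Set.mem_Ici.2 (div_nonneg ha hb.le)
  have h := Real.convexOn_mul_log.2 hmem1 hmem2 h1 h2 h3
  simp only [smul_eq_mul, mul_one, Real.log_one] at h
  have hcomb : c / (c + b) + b / (c + b) * (a / b) = (c + a) / (c + b) := by
    field_simp
  rw [hcomb] at h
  have h' := mul_le_mul_of_nonneg_left h hcb.le
  calc (c + a) * Real.log ((c + a) / (c + b))
      = (c + b) * ((c + a) / (c + b) * Real.log ((c + a) / (c + b))) := by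
        field_simp
    _ ≤ (c + b) * (c / (c + b) * (1 * 0) + b / (c + b) * (a / b * Real.log (a / b))) := h'
    _ = a * Real.log (a / b) := by field_simp; ring

private lemma key_lt (c a b : ℝ) (hc : 0 < c) (ha : 0 ≤ a) (hb : 0 < b) (hab : a ≠ b) :
    (c + a) * Real.log ((c + a) / (c + b)) < a * Real.log (a / b) := by
  have hcb : 0 < c + b := by linarith
  have h1 : (0:ℝ) < c / (c + b) := by positivity
  have h2 : (0:ℝ) < b / (c + b) := by positivity
  have h3 : c / (c + b) + b / (c + b) = 1 := by field_simp
  have hmem1 : (1:ℝ) ∈ Set.Ici (0:ℝ) := by norm_num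
  have hmem2 : a / b ∈ Set.Ici (0:ℝ) := Set.mem_Ici.2 (div_nonneg ha hb.le)
  have hne : (1:ℝ) ≠ a / b := by
    intro h; apply hab; field_simp at h; linarith
  have h := Real.strictConvexOn_mul_log.2 hmem1 hmem2 hne h1 h2 h3
  simp only [smul_eq_mul, mul_one, Real.log_one] at h
  have hcomb : c / (c + b) + b / (c + b) * (a / b) = (c + a) / (c + b) := by
    field_simp
  rw [hcomb] at h
  have h' := mul_lt_mul_of_pos_left h hcb
  calc (c + a) * Real.log ((c + a) / (c + b))
      = (c + b) * ((c + a) / (c + b) * Real.log ((c + a) / (c + b))) := by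
        field_simp
    _ < (c + b) * (c / (c + b) * (1 * 0) + b / (c + b) * (a / b * Real.log (a / b))) := h'
    _ = a * Real.log (a / b) := by field_simp; ring

private lemma term_le (α c p v m : ℝ) (hα : 0 < α) (hc : 0 < c) (hp : 0 ≤ p)
    (hv : 0 ≤ v) (hm : 0 ≤ m) (hpvm : p * v ≤ m) :
    p * (c + α * v) * Real.log (p * (c + α * v) / (p * (c + α * m))) ≤
      α * (p * v * Real.log (p * v / (p * m))) := by
  by_cases hp0 : p = 0
  · simp [hp0]
  have hp' : 0 < p := lt_of_le_of_ne hp (Ne.symm hp0)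
  rw [mul_div_mul_left _ _ hp0, mul_div_mul_left _ _ hp0]
  by_cases hv0 : v = 0
  · subst hv0
    simp only [mul_zero, add_zero, zero_mul, Real.log_zero, mul_zero]
    have harg : c / (c + α * m) ≤ 1 := by
      rw [div_le_one (by nlinarith)]; nlinarith
    have hlog : Real.log (c / (c + α * m)) ≤ 0 :=
      Real.log_nonpos (by positivity) harg
    exact mul_nonpos_of_nonneg_of_nonpos (by positivity) hlog
  have hv' : 0 < v := lt_of_le_of_ne hv (Ne.symm hv0)
  have hm' : 0 < m := lt_of_lt_of_le (mul_pos hp' hv') hpvm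
  have key := key_le c (α * v) (α * m) hc (by positivity) (by positivity)
  rw [mul_div_mul_left v m hα.ne'] at key
  calc p * (c + α * v) * Real.log ((c + α * v) / (c + α * m))
      = p * ((c + α * v) * Real.log ((c + α * v) / (c + α * m))) := by ring
    _ ≤ p * (α * v * Real.log (v / m)) := mul_le_mul_of_nonneg_left key hp
    _ = α * (p * v * Real.log (v / m)) := by ring

private lemma term_lt (α c p v m : ℝ) (hα : 0 < α) (hc : 0 < c) (hp : 0 ≤ p)
    (hv : 0 ≤ v) (hm : 0 ≤ m) (hpvm : p * v ≤ m) (hpv : p * v ≠ 0) (hvm : v ≠ m) :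
    p * (c + α * v) * Real.log (p * (c + α * v) / (p * (c + α * m))) <
      α * (p * v * Real.log (p * v / (p * m))) := by
  have hp0 : p ≠ 0 := fun h => hpv (by rw [h, zero_mul])
  have hv0 : v ≠ 0 := fun h => hpv (by rw [h, mul_zero])
  have hp' : 0 < p := lt_of_le_of_ne hp (Ne.symm hp0)
  have hv' : 0 < v := lt_of_le_of_ne hv (Ne.symm hv0)
  have hm' : 0 < m := lt_of_lt_of_le (mul_pos hp' hv') hpvm
  rw [mul_div_mul_left _ _ hp0, mul_div_mul_left _ _ hp0]
  have hab : α * v ≠ α * m := fun h => hvm (mul_left_cancel₀ hα.ne' h)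
  have key := key_lt c (α * v) (α * m) hc (by positivity) (by positivity) hab
  rw [mul_div_mul_left v m hα.ne'] at key
  calc p * (c + α * v) * Real.log ((c + α * v) / (c + α * m))
      = p * ((c + α * v) * Real.log ((c + α * v) / (c + α * m))) := by ring
    _ < p * (α * v * Real.log (v / m)) := mul_lt_mul_of_pos_left key hp'
    _ = α * (p * v * Real.log (v / m)) := by ring

/-- with `Q_Z` uniform on `𝒵`, if `I(P_X × V_{Z|X}) > 0` then for
every `α ∈ (0,1)`,
`I(P_X × [(1−α)·Q_Z + α·V_{Z|X}]) < α · I(P_X × V_{Z|X})`. -/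
theorem mutualInfo_mixture_strict_lt
    {X Z : Type*} [Fintype X] [Fintype Z] [Nonempty Z]
    (P : X → ℝ) (V : X → Z → ℝ)
    (hP : ∀ x, 0 ≤ P x) (hPsum : ∑ x, P x = 1)
    (hV : ∀ x z, 0 ≤ V x z) (hVsum : ∀ x, ∑ z, V x z = 1)
    (hI : 0 < mutualInfo (fun x z => P x * V x z))
    (α : ℝ) (hα : α ∈ Set.Ioo (0 : ℝ) 1) :
    mutualInfo (fun x z =>
        P x * ((1 - α) * (1 / (Fintype.card Z : ℝ)) + α * V x z)) <
      α * mutualInfo (fun x z => P x * V x z) := by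
  obtain ⟨hα0, hα1⟩ := hα
  have hn : (0:ℝ) < (Fintype.card Z : ℝ) := by
    exact_mod_cast Fintype.card_pos
  set n : ℝ := (Fintype.card Z : ℝ) with hn_def
  set c : ℝ := (1 - α) * (1 / n) with hc_def
  have hc : 0 < c := by
    apply mul_pos (by linarith) (by positivity)
  set M : Z → ℝ := fun z => ∑ x', P x' * V x' z with hM_def
  have hM0 : ∀ z, 0 ≤ M z := fun z =>
    Finset.sum_nonneg fun x _ => mul_nonneg (hP x) (hV x z)
  have hMle : ∀ x z, P x * V x z ≤ M z := fun x z =>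
    Finset.single_le_sum (f := fun x' => P x' * V x' z)
      (fun i _ => mul_nonneg (hP i) (hV i z)) (Finset.mem_univ x)
  have hrowV : ∀ x, (∑ z, P x * V x z) = P x := fun x => by
    rw [← Finset.mul_sum, hVsum x, mul_one]
  have hcolV : ∀ z, (∑ x', P x' * V x' z) = M z := fun z => rfl
  have hrowW : ∀ x, (∑ z, P x * (c + α * V x z)) = P x := by
    intro x
    rw [← Finset.mul_sum]
    have : (∑ z : Z, (c + α * V x z)) = 1 := by
      rw [Finset.sum_add_distrib, Finset.sum_const, ← Finset.mul_sum, hVsum x,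
        Finset.card_univ, hc_def]
      have : (Fintype.card Z : ℝ) = n := rfl
      rw [nsmul_eq_mul, this]
      field_simp
      ring
    rw [this, mul_one]
  have hcolW : ∀ z, (∑ x', P x' * (c + α * V x' z)) = c + α * M z := by
    intro z
    simp only [mul_add]
    rw [Finset.sum_add_distrib, ← Finset.sum_mul, hPsum, one_mul]
    congr 1
    rw [hM_def, Finset.mul_sum]
    exact Finset.sum_congr rfl fun x _ => by ring
  -- existence of a strict witness
  have hex : ∃ x z, P x * V x z ≠ 0 ∧ V x z ≠ M z := by
    by_contra h
    push_neg at h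
    have hzero : mutualInfo (fun x z => P x * V x z) = 0 := by
      rw [mutualInfo]
      refine Finset.sum_eq_zero fun x _ => Finset.sum_eq_zero fun z _ => ?_
      by_cases hpv : P x * V x z = 0
      · simp only [hpv, zero_mul]
      · have hVM := h x z hpv
        simp only [hrowV, hcolV]
        rw [← hVM]
        have hPx : P x ≠ 0 := fun h0 => hpv (by rw [h0, zero_mul])
        rw [show P x * V x z / (P x * V x z) = 1 from div_self hpv,
          Real.log_one, mul_zero]
    rw [hzero] at hI; exact lt_irrefl 0 hI
  obtain ⟨x₀, z₀, hpv0, hne0⟩ := hex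
  simp only [mutualInfo, hrowV, hcolV, hrowW, hcolW, Finset.mul_sum]
  refine Finset.sum_lt_sum
    (fun x _ => Finset.sum_le_sum fun z _ =>
      term_le α c (P x) (V x z) (M z) hα0 hc (hP x) (hV x z) (hM0 z) (hMle x z))
    ⟨x₀, Finset.mem_univ _, Finset.sum_lt_sum
      (fun z _ => term_le α c (P x₀) (V x₀ z) (M z) hα0 hc (hP x₀) (hV x₀ z)
        (hM0 z) (hMle x₀ z))
      ⟨z₀, Finset.mem_univ _, term_lt α c (P x₀) (V x₀ z₀) (M z₀) hα0 hc (hP x₀)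
        (hV x₀ z₀) (hM0 z₀) (hMle x₀ z₀) hpv0 hne0⟩⟩
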